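/- For every integer N ≥ 1 and every complex z with |z| < 1, the polynomial 2 + z + z² + ... + z^N is nonzero at z. -/

import Mathlib

theorem reverse_nonzero_on_disk (N : ℕ) (hN : 1 ≤ N) (z : ℂ) (hz : ‖z‖ < 1) :
    2 + ∑ i ∈ Finset.Icc 1 N, z ^ i ≠ 0 := by
  intro h
  have hIcc : ∑ i ∈ Finset.Icc 1 N, z ^ i = (∑ i ∈ Finset.range (N + 1), z ^ i) - 1 := by
    rw [Finset.range_eq_Ico, ← Finset.Ico_add_one_right_eq_Icc, Finset.sum_Ico_eq_sum_range,
      ← Nat.Ico_zero_eq_range, Finset.sum_Ico_eq_sum_range]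
    simp [Finset.sum_range_succ', pow_succ]
    exact Finset.sum_congr rfl fun x _ => by ring
  have hsum : (∑ i ∈ Finset.range (N + 1), z ^ i) = -1 := by
    have := h
    rw [hIcc] at this
    linear_combination this
  have hgeom := geom_sum_mul z (N + 1)
  rw [hsum] at hgeom
  have hkey : z ^ (N + 1) + z = 2 := by linear_combination -hgeom
  have habs : ‖z ^ (N + 1) + z‖ < 2 := by
    calc ‖z ^ (N + 1) + z‖ ≤ ‖z‖ ^ (N + 1) + ‖z‖ := by
          simpa using (norm_add_le (z ^ (N + 1)) z)
      _ < 1 + 1 := by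
          have h1 : ‖z‖ ^ (N + 1) ≤ ‖z‖ :=
            pow_le_of_le_one (norm_nonneg z) hz.le (Nat.succ_ne_zero N)
          linarith
      _ = 2 := by norm_num
  rw [hkey] at habs
  simp at habs
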